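/- Fix a real number q with 0 < q < 1, and for real m ≥ 2 define the open interval I_m = ( −(1 + (1−q)^{1/m}), −q/(1 + (1−q)^{1/m}) ). Then: (a) I_m is self-dual, i.e. if v ∈ I_m then q/v ∈ I_m; (b) if 2 ≤ m < m′ then I_m is strictly contained in I_{m′}; (c) if v₁, v₂ ∈ I_4 then v₁ ∥ v₂ ∈ I_2; (d) if v₁, v₂ ∈ I_4 then v₁ ⋈_q v₂ ∈ I_2. -/

import Mathlib

/-- Parallel connection of edge weights: `v₁ ∥ v₂ = (1+v₁)(1+v₂) - 1`. -/
def parallelConn (v₁ v₂ : ℝ) : ℝ := (1 + v₁) * (1 + v₂) - 1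

/-- Series connection of edge weights: `v₁ ⋈_q v₂ = v₁v₂ / (q + v₁ + v₂)`. -/
noncomputable def seriesConn (q v₁ v₂ : ℝ) : ℝ := v₁ * v₂ / (q + v₁ + v₂)

/-- For `0 < q < 1` and real `m ≥ 2`, the intervals
`I_m = ( -(1 + (1-q)^{1/m}), -q/(1 + (1-q)^{1/m}) )` satisfy:
(a) each `I_m` is self-dual under `v ↦ q/v`;
(b) `I_m ⊊ I_{m'}` for `2 ≤ m < m'`;
(c) `I_4 ∥ I_4 ⊆ I_2`; (d) `I_4 ⋈_q I_4 ⊆ I_2`. -/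
theorem interval_Im_properties (q : ℝ) (hq0 : 0 < q) (hq1 : q < 1)
    (I : ℝ → Set ℝ)
    (hI : ∀ m : ℝ, I m =
      Set.Ioo (-(1 + (1 - q) ^ m⁻¹)) (-q / (1 + (1 - q) ^ m⁻¹))) :
    (∀ m : ℝ, 2 ≤ m → ∀ v ∈ I m, q / v ∈ I m) ∧
    (∀ m m' : ℝ, 2 ≤ m → m < m' → I m ⊂ I m') ∧
    (∀ v₁ ∈ I 4, ∀ v₂ ∈ I 4, parallelConn v₁ v₂ ∈ I 2) ∧
    (∀ v₁ ∈ I 4, ∀ v₂ ∈ I 4, seriesConn q v₁ v₂ ∈ I 2) := by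
  have ht0 : (0:ℝ) < 1 - q := by linarith
  have ht1 : (1:ℝ) - q < 1 := by linarith
  -- Part (a)
  have partA : ∀ m : ℝ, 2 ≤ m → ∀ v ∈ I m, q / v ∈ I m := by
    intro m hm v hv
    rw [hI] at hv ⊢
    set x := (1 - q) ^ m⁻¹ with hxdef
    have hx0 : 0 < x := Real.rpow_pos_of_pos ht0 _
    have h1x : (0:ℝ) < 1 + x := by linarith
    obtain ⟨hvl, hvr⟩ := hv
    have hv0 : v < 0 := hvr.trans (div_neg_of_neg_of_pos (by linarith) h1x)
    have hvr' : v * (1 + x) < -q := (lt_div_iff₀ h1x).mp hvr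
    constructor
    · rw [lt_div_iff_of_neg hv0]
      nlinarith [hvr']
    · rw [div_lt_iff_of_neg hv0]
      have h1 : -q * v < q * (1 + x) := by nlinarith [mul_pos hq0 (show 0 < v + (1 + x) by linarith)]
      rw [div_mul_eq_mul_div, div_lt_iff₀ h1x]
      linarith
  -- Part (b)
  have partB : ∀ m m' : ℝ, 2 ≤ m → m < m' → I m ⊂ I m' := by
    intro m m' hm hmm'
    rw [hI, hI]
    set x := (1 - q) ^ m⁻¹ with hxdef
    set x' := (1 - q) ^ m'⁻¹ with hx'def
    have hx0 : 0 < x := Real.rpow_pos_of_pos ht0 _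
    have hx'0 : 0 < x' := Real.rpow_pos_of_pos ht0 _
    have hm0 : (0:ℝ) < m := by linarith
    have hm'0 : (0:ℝ) < m' := by linarith
    have hinv : m'⁻¹ < m⁻¹ := by
      rw [inv_lt_inv₀ hm'0 hm0]; exact hmm'
    have hxx : x < x' := Real.rpow_lt_rpow_of_exponent_gt ht0 ht1 hinv
    have h1x : (0:ℝ) < 1 + x := by linarith
    have h1x' : (0:ℝ) < 1 + x' := by linarith
    constructor
    · apply Set.Ioo_subset_Ioo
      · linarith
      · rw [neg_div, neg_div, neg_le_neg_iff]
        exact div_le_div_of_nonneg_left hq0.le h1x (by linarith)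
    · intro hsub
      have hmem : -(1 + x) ∈ Set.Ioo (-(1 + x')) (-q / (1 + x')) := by
        constructor
        · linarith
        · rw [neg_div, lt_neg, neg_neg]
          calc q / (1 + x') < 1 := (div_lt_one h1x').mpr (by linarith)
          _ ≤ 1 + x := by linarith
      have := (hsub hmem).1
      linarith
  -- square root facts
  set y := (1 - q) ^ ((4:ℝ))⁻¹ with hydef
  have hy0 : 0 < y := Real.rpow_pos_of_pos ht0 _
  have hy1 : y < 1 := Real.rpow_lt_one ht0.le ht1 (by norm_num)
  have hx2 : (1 - q) ^ ((2:ℝ))⁻¹ = y ^ 2 := by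
    rw [hydef, ← Real.rpow_natCast ((1 - q) ^ ((4:ℝ))⁻¹) 2, ← Real.rpow_mul ht0.le]
    norm_num
  have hy4 : y ^ 4 = 1 - q := by
    rw [hydef, ← Real.rpow_natCast ((1 - q) ^ ((4:ℝ))⁻¹) 4, ← Real.rpow_mul ht0.le]
    norm_num
  have h1y : (0:ℝ) < 1 + y := by linarith
  have h1y2 : (0:ℝ) < 1 + y ^ 2 := by positivity
  -- bounds for elements of I 4
  have key : ∀ v : ℝ, v ∈ I 4 → -y < 1 + v ∧ 1 + v < y := by
    intro v hv
    rw [hI] at hv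
    obtain ⟨hvl, hvr⟩ := hv
    rw [show ((4:ℝ))⁻¹ = ((4:ℝ))⁻¹ from rfl] at *
    have hvl' : -(1 + y) < v := hvl
    have hvr' : v * (1 + y) < -q := (lt_div_iff₀ h1y).mp hvr
    have hy2 : y ^ 4 < y ^ 2 := by nlinarith [pow_pos hy0 2]
    constructor
    · linarith
    · have h := lt_of_mul_lt_mul_right
        (show v * (1 + y) < (y - 1) * (1 + y) by nlinarith) h1y.le
      linarith
  -- Part (c)
  have partC : ∀ v₁ ∈ I 4, ∀ v₂ ∈ I 4, parallelConn v₁ v₂ ∈ I 2 := by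
    intro v₁ hv₁ v₂ hv₂
    obtain ⟨h1l, h1r⟩ := key v₁ hv₁
    obtain ⟨h2l, h2r⟩ := key v₂ hv₂
    have hu_lo : -y ^ 2 < (1 + v₁) * (1 + v₂) := by
      nlinarith [mul_pos (show 0 < y - (1+v₁) by linarith) (show 0 < y - (1+v₂) by linarith),
        mul_pos (show 0 < (1+v₁) + y by linarith) (show 0 < (1+v₂) + y by linarith)]
    have hu_hi : (1 + v₁) * (1 + v₂) < y ^ 2 := by
      nlinarith [mul_pos (show 0 < y - (1+v₁) by linarith) (show 0 < (1+v₂) + y by linarith),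
        mul_pos (show 0 < (1+v₁) + y by linarith) (show 0 < y - (1+v₂) by linarith)]
    rw [hI]
    unfold parallelConn
    rw [hx2]
    constructor
    · linarith
    · rw [neg_div, lt_neg, div_lt_iff₀ h1y2]
      nlinarith [mul_lt_mul_of_pos_right hu_hi h1y2, hy4]
  -- Part (d)
  refine ⟨partA, partB, partC, ?_⟩
  intro v₁ hv₁ v₂ hv₂
  have hmem₁ := hv₁
  have hmem₂ := hv₂
  rw [hI] at hmem₁ hmem₂
  have hv₁0 : v₁ < 0 := hmem₁.2.trans (div_neg_of_neg_of_pos (by linarith) h1y)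
  have hv₂0 : v₂ < 0 := hmem₂.2.trans (div_neg_of_neg_of_pos (by linarith) h1y)
  have hd : q + v₁ + v₂ < 0 := by
    have h1 : v₁ * (1 + y) < -q := (lt_div_iff₀ h1y).mp hmem₁.2
    have h2 : v₂ * (1 + y) < -q := (lt_div_iff₀ h1y).mp hmem₂.2
    nlinarith [mul_pos hq0 hy0]
  have hv₁ne : v₁ ≠ 0 := hv₁0.ne
  have hv₂ne : v₂ ≠ 0 := hv₂0.ne
  have hdne : q + v₁ + v₂ ≠ 0 := hd.ne
  have hq₁ : q / v₁ ∈ I 4 := partA 4 (by norm_num) v₁ hv₁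
  have hq₂ : q / v₂ ∈ I 4 := partA 4 (by norm_num) v₂ hv₂
  have hw : parallelConn (q / v₁) (q / v₂) ∈ I 2 := partC _ hq₁ _ hq₂
  have hwval : parallelConn (q / v₁) (q / v₂) = q * (q + v₁ + v₂) / (v₁ * v₂) := by
    unfold parallelConn
    field_simp
    ring
  have hseq : seriesConn q v₁ v₂ = q / parallelConn (q / v₁) (q / v₂) := by
    rw [hwval]
    unfold seriesConn
    rw [div_div_eq_mul_div, mul_div_mul_left _ _ hq0.ne']
  rw [hseq]
  exact partA 2 le_rfl _ hw
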